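/- Let G be a finite group, F a field with char F not dividing |G|, H a subgroup of G, and V a finite-dimensional F H-module. Then the Noether number satisfies β(G, Ind_H^G V) ≥ β(H, V), where β(G, W) is the smallest d such that the invariant ring S(W)^G is generated as an F-algebra by its homogeneous elements of degree at most d. -/

import Mathlib

noncomputable section
open MvPolynomial

variable {F : Type} [Field F]

/-- The algebra homomorphism between polynomial algebras (viewed as symmetric algebras)
induced by a linear map between the spaces of variables (the degree one components). -/
noncomputable def algOf {α β : Type} [Fintype α] [Fintype β] [DecidableEq α]
    (f : (α → F) →ₗ[F] (β → F)) :
    MvPolynomial α F →ₐ[F] MvPolynomial β F :=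
  aeval fun j => ∑ i, f (Pi.single j 1) i • X i

/-- The embedding of the space of linear forms into the polynomial algebra. -/
noncomputable def lin {β : Type} [Fintype β] (w : β → F) : MvPolynomial β F :=
  ∑ i, w i • X i

/-- The subalgebra of `G`-invariants of the symmetric algebra of a representation. -/
def invariants {G : Type} [Group G] {α : Type} [Fintype α] [DecidableEq α]
    (ρ : Representation F G (α → F)) : Subalgebra F (MvPolynomial α F) where
  carrier := {p | ∀ g : G, algOf (ρ g) p = p}
  mul_mem' := fun ha hb g => by rw [map_mul, ha g, hb g]
  add_mem' := fun ha hb g => by rw [map_add, ha g, hb g]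
  algebraMap_mem' := fun r g => (algOf (ρ g)).commutes r

variable {G : Type} [Group G] {α : Type} [Fintype α] [DecidableEq α]

/-- The invariant ring is generated as an `F`-algebra in degrees at most `d`. -/
def genLE (ρ : Representation F G (α → F)) (d : ℕ) : Prop :=
  Algebra.adjoin F {p : MvPolynomial α F | p ∈ invariants ρ ∧ p.totalDegree ≤ d}
    = invariants ρ

/-- The Noether number `β(G,W)` of a representation. -/
def noether (ρ : Representation F G (α → F)) : ℕ := sInf {d | genLE ρ d}

/-- The Hilbert ideal: the ideal of `S(W)` generated by the invariants of positive degree. -/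
def hilbertIdeal (ρ : Representation F G (α → F)) : Ideal (MvPolynomial α F) :=
  Ideal.span {p | p ∈ invariants ρ ∧ constantCoeff p = 0}

/-- `b(G,W)`: the top degree of the algebra of coinvariants `S(W)/S(W)₊^G S(W)`. -/
def coinvTop (ρ : Representation F G (α → F)) : ℕ :=
  sSup {d | ∃ p : MvPolynomial α F, p.IsHomogeneous d ∧ p ∉ hilbertIdeal ρ}

/-- `b_k(G,W)`: the top degree of `S(W)/((S(W)₊^G)^k S(W))`. -/
def coinvTopK (ρ : Representation F G (α → F)) (k : ℕ) : ℕ :=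
  sSup {d | ∃ p : MvPolynomial α F, p.IsHomogeneous d ∧ p ∉ (hilbertIdeal ρ) ^ k}

/-- The span of all products of `k` positive-degree invariants,
i.e. `(S(W)₊^G)^k` computed inside the invariant ring. -/
def prodPow (ρ : Representation F G (α → F)) (k : ℕ) : Submodule F (MvPolynomial α F) :=
  Submodule.span F {x | ∃ f : Fin k → MvPolynomial α F,
    (∀ i, f i ∈ invariants ρ ∧ constantCoeff (f i) = 0) ∧ x = ∏ i, f i}

/-- The `k`-th Noether number `β_k(G,W)`, the top degree of `S(W)^G/(S(W)₊^G)^{k+1}`. -/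
def noetherK (ρ : Representation F G (α → F)) (k : ℕ) : ℕ :=
  sSup {d | ∃ p, p ∈ invariants ρ ∧ p.IsHomogeneous d ∧ p ∉ prodPow ρ (k+1)}

/-- `β(G)`: the supremum of the Noether numbers over all finite dimensional modules. -/
def noetherSup (F G : Type) [Field F] [Group G] : ℕ∞ :=
  ⨆ (n : ℕ) (ρ : Representation F G (Fin n → F)), (noether ρ : ℕ∞)

/-- `b(G)`: the supremum of `b(G,W)` over all finite dimensional modules. -/
def coinvSup (F G : Type) [Field F] [Group G] : ℕ∞ :=
  ⨆ (n : ℕ) (ρ : Representation F G (Fin n → F)), (coinvTop ρ : ℕ∞)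

/-- `β_k(G)`: the supremum of the `k`-th Noether numbers over all modules. -/
def noetherKSup (F G : Type) [Field F] [Group G] (k : ℕ) : ℕ∞ :=
  ⨆ (n : ℕ) (ρ : Representation F G (Fin n → F)), (noetherK ρ k : ℕ∞)

/-! ### Auxiliary development -/

section AuxBasic

variable {F : Type} [Field F]

/-- `lin` as a linear map. -/
noncomputable def linL {β : Type} [Fintype β] : (β → F) →ₗ[F] MvPolynomial β F where
  toFun := lin
  map_add' w₁ w₂ := by simp [lin, add_smul, Finset.sum_add_distrib]
  map_smul' c w := by simp [lin, Finset.smul_sum, smul_smul]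

lemma lin_eq_linL {β : Type} [Fintype β] (w : β → F) : lin w = linL w := rfl

lemma algOf_X {α β : Type} [Fintype α] [Fintype β] [DecidableEq α]
    (f : (α → F) →ₗ[F] (β → F)) (j : α) :
    algOf f (X j) = lin (f (Pi.single j 1)) := by
  simp [algOf, lin]

lemma algOf_lin {α β : Type} [Fintype α] [Fintype β] [DecidableEq α]
    (f : (α → F) →ₗ[F] (β → F)) (w : α → F) :
    algOf f (lin w) = lin (f w) := by
  have hw : ∑ j, w j • (Pi.single j (1:F) : α → F) = w := by
    ext i
    simp [Pi.single_apply, Finset.sum_ite_eq']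
  rw [lin, map_sum]
  simp_rw [map_smul, algOf_X, lin_eq_linL]
  conv_rhs => rw [← hw]
  simp [map_sum, map_smul]

end AuxBasic
section AuxBasic2

variable {F : Type} [Field F]

lemma algOf_comp {α β γ : Type} [Fintype α] [Fintype β] [Fintype γ]
    [DecidableEq α] [DecidableEq β]
    (f₂ : (β → F) →ₗ[F] (γ → F)) (f₁ : (α → F) →ₗ[F] (β → F)) (p : MvPolynomial α F) :
    algOf f₂ (algOf f₁ p) = algOf (f₂ ∘ₗ f₁) p := by
  have h : (algOf f₂).comp (algOf (F := F) f₁) = algOf (f₂ ∘ₗ f₁) := by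
    apply MvPolynomial.algHom_ext
    intro j
    simp [AlgHom.comp_apply, algOf_X, algOf_lin]
  exact AlgHom.congr_fun h p

lemma algOf_zero {α β : Type} [Fintype α] [Fintype β] [DecidableEq α]
    (p : MvPolynomial α F) :
    algOf (0 : (α → F) →ₗ[F] (β → F)) p = C (constantCoeff p) := by
  have h : (fun j : α => ∑ i, (0 : (α → F) →ₗ[F] (β → F)) (Pi.single j 1) i • X i)
      = (fun _ : α => (0 : MvPolynomial β F)) := by
    funext j; simp
  rw [algOf, h, aeval_zero', algebraMap_eq]

lemma isHomogeneous_lin {β : Type} [Fintype β] (w : β → F) :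
    (lin w).IsHomogeneous 1 := by
  have : lin w ∈ homogeneousSubmodule β F 1 :=
    Submodule.sum_mem _ fun i _ =>
      Submodule.smul_mem _ _ ((mem_homogeneousSubmodule _ _).2 (isHomogeneous_X _ _))
  exact (mem_homogeneousSubmodule _ _).1 this

lemma algOf_isHomogeneous {α β : Type} [Fintype α] [Fintype β] [DecidableEq α]
    (f : (α → F) →ₗ[F] (β → F)) {p : MvPolynomial α F} {n : ℕ}
    (hp : p.IsHomogeneous n) : (algOf f p).IsHomogeneous n := by
  have := hp.aeval (fun j : α => ∑ i, f (Pi.single j 1) i • X i)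
    (fun j => isHomogeneous_lin (f (Pi.single j 1)))
  simpa [algOf] using this

lemma algOf_homogeneousComponent {α β : Type} [Fintype α] [Fintype β] [DecidableEq α]
    (f : (α → F) →ₗ[F] (β → F)) (p : MvPolynomial α F) (n : ℕ) :
    algOf f (homogeneousComponent n p) = homogeneousComponent n (algOf f p) := by
  conv_rhs => rw [← sum_homogeneousComponent p, map_sum, map_sum]
  have hterm : ∀ i, homogeneousComponent n (algOf f (homogeneousComponent i p))
      = if n = i then algOf f (homogeneousComponent i p) else 0 := fun i =>
    homogeneousComponent_of_mem
      ((mem_homogeneousSubmodule _ _).2 (algOf_isHomogeneous f (homogeneousComponent_isHomogeneous i p)))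
  rw [Finset.sum_congr rfl fun i _ => hterm i]
  rw [Finset.sum_ite_eq (Finset.range (p.totalDegree + 1)) n
    (fun i => algOf f (homogeneousComponent i p))]
  by_cases h : n ∈ Finset.range (p.totalDegree + 1)
  · rw [if_pos h]
  · rw [if_neg h, homogeneousComponent_eq_zero, map_zero]
    simpa using Nat.lt_of_succ_le (le_of_not_gt (by simpa [Finset.mem_range] using h))

lemma algOf_totalDegree_le {α β : Type} [Fintype α] [Fintype β] [DecidableEq α]
    (f : (α → F) →ₗ[F] (β → F)) (p : MvPolynomial α F) :
    (algOf f p).totalDegree ≤ p.totalDegree := by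
  conv_lhs => rw [← sum_homogeneousComponent p, map_sum]
  refine (totalDegree_finset_sum _ _).trans (Finset.sup_le fun i hi => ?_)
  refine ((algOf_isHomogeneous f (homogeneousComponent_isHomogeneous i p)).totalDegree_le).trans ?_
  simpa [Nat.lt_succ_iff] using Finset.mem_range.1 hi

end AuxBasic2
section AuxGroup

variable {F : Type} [Field F] {G : Type} [Group G] {β : Type} [Fintype β] [DecidableEq β]

lemma algOf_rep_mul (σ : Representation F G (β → F)) (g₁ g₂ : G) (p : MvPolynomial β F) :
    algOf (σ g₁) (algOf (σ g₂) p) = algOf (σ (g₁ * g₂)) p := by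
  rw [algOf_comp, map_mul, Module.End.mul_eq_comp]

lemma sumG_mem [Fintype G] (σ : Representation F G (β → F)) (q : MvPolynomial β F) :
    (∑ g : G, algOf (σ g) q) ∈ invariants σ := by
  intro g₀
  rw [map_sum]
  simp_rw [algOf_rep_mul]
  exact Fintype.sum_bijective (g₀ * ·) (Group.mulLeft_bijective g₀)
    (fun g => algOf (σ (g₀ * g)) q) (fun g => algOf (σ g) q) (fun g => rfl)

lemma homogeneousComponent_mem_invariants {σ : Representation F G (β → F)}
    {p : MvPolynomial β F} (hp : p ∈ invariants σ) (n : ℕ) :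
    homogeneousComponent n p ∈ invariants σ := fun g => by
  rw [algOf_homogeneousComponent, hp g]

/-- The Reynolds operator. -/
noncomputable def reyn [Fintype G] (σ : Representation F G (β → F)) :
    MvPolynomial β F →ₗ[F] MvPolynomial β F :=
  (Fintype.card G : F)⁻¹ • ∑ g : G, (algOf (σ g)).toLinearMap

lemma reyn_apply [Fintype G] (σ : Representation F G (β → F)) (p : MvPolynomial β F) :
    reyn σ p = (Fintype.card G : F)⁻¹ • ∑ g : G, algOf (σ g) p := by
  simp [reyn, LinearMap.sum_apply]

lemma reyn_mem [Fintype G] (σ : Representation F G (β → F)) (p : MvPolynomial β F) :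
    reyn σ p ∈ invariants σ := by
  rw [reyn_apply]
  exact Subalgebra.smul_mem _ (sumG_mem σ p) _

lemma reyn_of_mem [Fintype G] {σ : Representation F G (β → F)}
    (hchar : (Fintype.card G : F) ≠ 0) {p : MvPolynomial β F} (hp : p ∈ invariants σ) :
    reyn σ p = p := by
  rw [reyn_apply]
  have h : ∑ g : G, algOf (σ g) p = (Fintype.card G) • p := by
    rw [Finset.sum_congr rfl fun g _ => hp g]
    simp [Finset.card_univ]
  rw [h, ← Nat.cast_smul_eq_nsmul F, smul_smul, inv_mul_cancel₀ hchar, one_smul]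

lemma reyn_mul [Fintype G] {σ : Representation F G (β → F)}
    {t : MvPolynomial β F} (ht : t ∈ invariants σ) (q : MvPolynomial β F) :
    reyn σ (q * t) = reyn σ q * t := by
  rw [reyn_apply, reyn_apply, smul_mul_assoc, Finset.sum_mul]
  congr 1
  exact Finset.sum_congr rfl fun g _ => by rw [map_mul, ht g]

lemma reyn_isHomogeneous [Fintype G] {σ : Representation F G (β → F)}
    {p : MvPolynomial β F} {n : ℕ} (hp : p.IsHomogeneous n) :
    (reyn σ p).IsHomogeneous n := by
  rw [reyn_apply]
  refine (mem_homogeneousSubmodule _ _).1 ?_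
  exact Submodule.smul_mem _ _ (Submodule.sum_mem _ fun g _ =>
    (mem_homogeneousSubmodule _ _).2 (algOf_isHomogeneous _ hp))

lemma homogeneousComponent_mul_right {q t : MvPolynomial β F} {d n : ℕ}
    (ht : t.IsHomogeneous d) :
    homogeneousComponent n (q * t)
      = if d ≤ n then homogeneousComponent (n - d) q * t else 0 := by
  conv_lhs => rw [← sum_homogeneousComponent q, Finset.sum_mul, map_sum]
  have hterm : ∀ k, homogeneousComponent n (homogeneousComponent k q * t)
      = if n = k + d then homogeneousComponent k q * t else 0 := fun k =>
    homogeneousComponent_of_mem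
      ((mem_homogeneousSubmodule _ _).2 ((homogeneousComponent_isHomogeneous k q).mul ht))
  rw [Finset.sum_congr rfl fun k _ => hterm k]
  by_cases hd : d ≤ n
  · rw [if_pos hd]
    have hcond : ∀ k : ℕ, (n = k + d) = (k = n - d) := fun k => propext (by omega)
    simp_rw [hcond]
    rw [Finset.sum_ite_eq' (Finset.range (q.totalDegree + 1)) (n - d)
      (fun k => homogeneousComponent k q * t)]
    by_cases hb : n - d ∈ Finset.range (q.totalDegree + 1)
    · rw [if_pos hb]
    · rw [if_neg hb, homogeneousComponent_eq_zero, zero_mul]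
      simp only [Finset.mem_range] at hb
      omega
  · rw [if_neg hd]
    exact Finset.sum_eq_zero fun k _ => if_neg (by omega)

end AuxGroup
section ExistsGenLE

variable {F : Type} [Field F] {G : Type} [Group G]

lemma exists_genLE [Fintype G] {β : Type} [Fintype β] [DecidableEq β]
    (hchar : (Fintype.card G : F) ≠ 0) (σ : Representation F G (β → F)) :
    ∃ d, genLE σ d := by
  classical
  set Sp : Set (MvPolynomial β F) :=
    {p | p ∈ invariants σ ∧ constantCoeff p = 0 ∧ ∃ n, p.IsHomogeneous n} with hSp
  set I : Ideal (MvPolynomial β F) := Ideal.span Sp with hI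
  obtain ⟨S', hS'⟩ : I.FG := IsNoetherian.noetherian I
  have hsmem : ∀ s ∈ S', s ∈ Submodule.span (MvPolynomial β F) Sp := by
    intro s hs
    have h : s ∈ I := by rw [← hS']; exact Ideal.subset_span hs
    exact h
  choose t ht1 ht2 using fun s (hs : s ∈ S') =>
    Submodule.mem_span_finite_of_mem_span (hsmem s hs)
  set T : Finset (MvPolynomial β F) := S'.attach.biUnion (fun s => t s.1 s.2) with hT
  have hTsub : (↑T : Set (MvPolynomial β F)) ⊆ Sp := by
    intro x hx
    simp only [hT, Finset.coe_biUnion, Set.mem_iUnion, Finset.mem_coe] at hx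
    obtain ⟨s, hs, hx⟩ := hx
    exact ht1 s.1 s.2 hx
  have hspanT : Ideal.span (↑T : Set (MvPolynomial β F)) = I := by
    refine le_antisymm ?_ ?_
    · exact (Ideal.span_mono hTsub).trans (le_of_eq rfl)
    · rw [← hS']
      refine Ideal.span_le.2 fun s hs => ?_
      refine Submodule.span_mono ?_ (ht2 s hs)
      intro x hx
      simp only [hT, Finset.coe_biUnion, Set.mem_iUnion, Finset.mem_coe]
      exact ⟨⟨s, hs⟩, Finset.mem_attach _ _, hx⟩
  set d₀ : ℕ := T.sup fun p => p.totalDegree with hd₀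
  set A : Subalgebra F (MvPolynomial β F) :=
    Algebra.adjoin F {p | p ∈ invariants σ ∧ p.totalDegree ≤ d₀} with hA
  have hT_A : ∀ p ∈ T, p ∈ A :=
    fun p hp => Algebra.subset_adjoin ⟨(hTsub hp).1, Finset.le_sup hp⟩
  have key : ∀ n : ℕ, ∀ p, p ∈ invariants σ → p.IsHomogeneous n → p ∈ A := by
    intro n
    induction n using Nat.strong_induction_on with
    | _ n IH =>
    intro p hp hpn
    by_cases hn : n = 0
    · subst hn
      have h1 : homogeneousComponent 0 p = p :=
        (homogeneousComponent_of_mem ((mem_homogeneousSubmodule _ _).2 hpn)).trans (if_pos rfl)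
      have h2 : p = C (coeff 0 p) := by conv_lhs => rw [← h1, homogeneousComponent_zero]
      rw [h2, ← algebraMap_eq]
      exact Subalgebra.algebraMap_mem A _
    · have hc0 : constantCoeff p = 0 := by
        have := hpn.coeff_eq_zero (d := 0) (by simpa using Ne.symm hn)
        simpa [constantCoeff_eq] using this
      have hpI : p ∈ Ideal.span (↑T : Set (MvPolynomial β F)) := by
        rw [hspanT]
        exact Ideal.subset_span ⟨hp, hc0, n, hpn⟩
      obtain ⟨q, -, hq⟩ := Submodule.mem_span_finset.mp hpI
      have hpcomp : p = ∑ x ∈ T, homogeneousComponent n (q x * x) := by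
        conv_lhs => rw [← (homogeneousComponent_of_mem
          ((mem_homogeneousSubmodule _ _).2 hpn)).trans (if_pos rfl)]
        rw [← map_sum]
        congr 1
        rw [← hq]
        simp [smul_eq_mul]
      have hrey : p = ∑ x ∈ T, reyn σ (homogeneousComponent n (q x * x)) := by
        conv_lhs => rw [← reyn_of_mem hchar hp, hpcomp]
        rw [map_sum]
      have hterm : ∀ x ∈ T, reyn σ (homogeneousComponent n (q x * x)) ∈ A := by
        intro x hx
        obtain ⟨hxinv, hxc0, dx, hxdx⟩ := hTsub hx
        rcases eq_or_ne x 0 with rfl | hx0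
        · simp only [mul_zero, map_zero]
          exact Subalgebra.zero_mem A
        have hdx1 : 1 ≤ dx := by
          rcases Nat.eq_zero_or_pos dx with h0 | h
          · exfalso
            apply hx0
            subst h0
            have := (homogeneousComponent_of_mem
              ((mem_homogeneousSubmodule _ _).2 hxdx)).trans (if_pos rfl)
            rw [← this, homogeneousComponent_zero, ← constantCoeff_eq, hxc0, map_zero]
          · exact h
        rw [homogeneousComponent_mul_right hxdx]
        by_cases hdn : dx ≤ n
        · rw [if_pos hdn, reyn_mul hxinv]
          have hlt : n - dx < n := by omega
          exact Subalgebra.mul_mem A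
            (IH _ hlt _ (reyn_mem σ _)
              (reyn_isHomogeneous (homogeneousComponent_isHomogeneous _ _)))
            (hT_A x hx)
        · rw [if_neg hdn, map_zero]
          exact Subalgebra.zero_mem A
      rw [hrey]
      exact Subalgebra.sum_mem A hterm
  refine ⟨d₀, le_antisymm (Algebra.adjoin_le fun p hp => hp.1) ?_⟩
  intro p hp
  rw [← sum_homogeneousComponent p]
  exact Subalgebra.sum_mem A fun k _ =>
    key k _ (homogeneousComponent_mem_invariants hp k) (homogeneousComponent_isHomogeneous k p)

end ExistsGenLE
section Transfer

variable {F : Type} [Field F]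

lemma genLE_of_induced
    {G : Type} [Group G] [Fintype G]
    (hchar : (Fintype.card G : F) ≠ 0)
    (H : Subgroup G) {nV m : ℕ}
    (ρ : Representation F H (Fin nV → F))
    (σ : Representation F G (Fin m → F))
    (ι : (Fin nV → F) →ₗ[F] (Fin m → F)) (hι : Function.Injective ι)
    (hequiv : ∀ h : H, σ h ∘ₗ ι = ι ∘ₗ ρ h)
    (C : Set G) (hC : Subgroup.IsComplement C (H : Set G)) (h1 : (1:G) ∈ C)
    (hindep : iSupIndep fun c : C => (LinearMap.range ι).map (σ c.1))
    (hspan : ⨆ c : C, (LinearMap.range ι).map (σ c.1) = ⊤)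
    (d : ℕ) (hσd : genLE σ d) : genLE ρ d := by
  classical
  set U : Submodule F (Fin m → F) := LinearMap.range ι with hU
  set K : Submodule F (Fin m → F) :=
    ⨆ c : C, ⨆ _ : (c : G) ≠ 1, U.map (σ (c : G)) with hK
  have hU1 : U.map (σ (1:G)) = U := by
    rw [map_one, Module.End.one_eq_id, Submodule.map_id]
  have hiff : ∀ c : ↥C, (c ≠ (⟨1, h1⟩ : ↥C)) ↔ ((c : G) ≠ 1) := fun c =>
    ⟨fun h hh => h (Subtype.ext hh), fun h hh => h (by rw [hh])⟩
  have e2 : (⨆ j, ⨆ (_ : j ≠ (⟨1,h1⟩ : ↥C)), U.map (σ (j : G))) = K := by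
    rw [hK]
    exact iSup_congr fun c => iSup_congr_Prop (hiff c) (fun _ => rfl)
  have e1 : U.map (σ ((⟨1, h1⟩ : ↥C) : G)) = U := hU1
  have hdisj : Disjoint U K := by
    have h : Disjoint (U.map (σ ((⟨1, h1⟩ : ↥C) : G)))
        (⨆ j, ⨆ (_ : j ≠ (⟨1, h1⟩ : ↥C)), U.map (σ (j : G))) := hindep ⟨1, h1⟩
    rw [e1, e2] at h
    exact h
  have hcodis : U ⊔ K = ⊤ := by
    have hsplit : (⨆ c : C, U.map (σ (c : G))) = U ⊔ K := by
      rw [iSup_split_single (fun c : C => U.map (σ (c : G))) ⟨1, h1⟩, e1, e2]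
    rw [← hsplit]
    exact hspan
  have hcompl : IsCompl U K := ⟨hdisj, codisjoint_iff.mpr hcodis⟩
  set e : (Fin nV → F) ≃ₗ[F] U := LinearEquiv.ofInjective ι hι with he
  set π : (Fin m → F) →ₗ[F] (Fin nV → F) :=
    e.symm.toLinearMap ∘ₗ U.linearProjOfIsCompl K hcompl with hπ
  have hπι : ∀ v, π (ι v) = v := by
    intro v
    have h1' : U.linearProjOfIsCompl K hcompl (ι v) = ⟨ι v, LinearMap.mem_range_self ι v⟩ :=
      Submodule.linearProjOfIsCompl_apply_left hcompl ⟨ι v, LinearMap.mem_range_self ι v⟩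
    rw [hπ]
    simp only [LinearMap.comp_apply, LinearEquiv.coe_coe]
    rw [h1', LinearEquiv.symm_apply_eq, he]
    exact Subtype.ext (Eq.symm (LinearEquiv.ofInjective_apply (f := ι) (h := hι) v))
  have hπK : ∀ x ∈ K, π x = 0 := by
    intro x hx
    rw [hπ]
    simp only [LinearMap.comp_apply]
    rw [show U.linearProjOfIsCompl K hcompl x = 0 from Submodule.projectionOnto_apply_of_mem_right hcompl hx]
    exact map_zero (e.symm : ↥U →ₗ[F] (Fin nV → F))
  have hσι : ∀ h : H, ∀ v, σ (h : G) (ι v) = ι (ρ h v) := fun h v => by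
    simpa using LinearMap.congr_fun (hequiv h) v
  have hUmapH : ∀ h : H, U.map (σ (h : G)) = U := by
    intro h
    rw [hU, ← LinearMap.range_comp, hequiv h, LinearMap.range_comp]
    have hsurj : LinearMap.range (ρ h) = ⊤ := by
      rw [LinearMap.range_eq_top]
      intro v
      refine ⟨ρ h⁻¹ v, ?_⟩
      rw [← Module.End.mul_apply, ← map_mul, mul_inv_cancel, map_one, Module.End.one_apply]
    rw [hsurj, Submodule.map_top]
  have hCH : ∀ c : ↥C, (c : G) ∈ H → (c : G) = 1 := by
    intro c hc
    have h := hC.1 (a₁ := (c, (⟨1, H.one_mem⟩ : ↥(H : Set G))))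
      (a₂ := ((⟨1, h1⟩ : ↥C), (⟨(c : G), hc⟩ : ↥(H : Set G)))) (by simp)
    exact congrArg (fun x => (x.1 : G)) h
  have hKmapH : ∀ h : H, ∀ x ∈ K, σ (h : G) x ∈ K := by
    intro h x hx
    have hmap : K.map (σ (h : G)) ≤ K := by
      rw [hK]
      simp only [Submodule.map_iSup]
      refine iSup_le fun c => iSup_le fun hc => ?_
      rw [← Submodule.map_comp, ← Module.End.mul_eq_comp, ← map_mul]
      obtain ⟨⟨c', h'⟩, heq, -⟩ := hC.existsUnique ((h : G) * (c : G))
      dsimp only at heq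
      have hc' : (c' : G) ≠ 1 := by
        intro h0
        apply hc
        apply hCH c
        have hcv : (c : G) = (h : G)⁻¹ * ((h : G) * (c : G)) :=
          (inv_mul_cancel_left _ _).symm
        rw [hcv, ← heq, h0, one_mul]
        exact H.mul_mem (H.inv_mem h.2) h'.2
      rw [← heq, map_mul, Module.End.mul_eq_comp, Submodule.map_comp]
      rw [show U.map (σ (h' : G)) = U from hUmapH ⟨(h' : G), h'.2⟩]
      refine le_iSup_of_le c' ?_
      exact le_iSup_of_le hc' le_rfl
    exact hmap (Submodule.mem_map_of_mem hx)
  have hπequiv : ∀ h : H, ∀ x, ρ h (π x) = π (σ (h : G) x) := by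
    intro h x
    obtain ⟨u, hu, k, hk, rfl⟩ := Submodule.mem_sup.mp (hcodis ▸ Submodule.mem_top (x := x))
    obtain ⟨v, rfl⟩ := hu
    have ha : π (ι v + k) = v := by rw [map_add, hπι, hπK k hk, add_zero]
    have hb : π (σ (h : G) (ι v + k)) = ρ h v := by
      rw [map_add, hσι h v, map_add, hπι, hπK _ (hKmapH h k hk), add_zero]
    rw [ha, hb]
  have hπσιH : ∀ g : G, ∀ hg : g ∈ H, (π ∘ₗ σ g) ∘ₗ ι = ρ ⟨g, hg⟩ := by
    intro g hg
    apply LinearMap.ext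
    intro v
    simp only [LinearMap.comp_apply]
    rw [hσι ⟨g, hg⟩ v, hπι]
  have hπσιnH : ∀ g : G, g ∉ H → (π ∘ₗ σ g) ∘ₗ ι = 0 := by
    intro g hg
    apply LinearMap.ext
    intro v
    simp only [LinearMap.comp_apply, LinearMap.zero_apply]
    obtain ⟨⟨c, h'⟩, heq, -⟩ := hC.existsUnique g
    dsimp only at heq
    have hc1 : (c : G) ≠ 1 := by
      intro h0
      apply hg
      rw [← heq, h0, one_mul]
      exact h'.2
    have hmem : σ g (ι v) ∈ K := by
      rw [← heq, map_mul, Module.End.mul_apply]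
      rw [show σ (h' : G) (ι v) = ι (ρ ⟨(h' : G), h'.2⟩ v) from hσι ⟨(h' : G), h'.2⟩ v]
      have hin : σ (c : G) (ι (ρ ⟨(h' : G), h'.2⟩ v)) ∈ U.map (σ (c : G)) :=
        Submodule.mem_map_of_mem ⟨_, rfl⟩
      have hle : U.map (σ (c : G)) ≤ K := by
        rw [hK]
        refine le_iSup_of_le c ?_
        exact le_iSup_of_le hc1 le_rfl
      exact hle hin
    exact hπK _ hmem
  unfold genLE at hσd ⊢
  refine le_antisymm (Algebra.adjoin_le fun p hp => hp.1) ?_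
  intro p hp
  have himg : ∀ x : MvPolynomial (Fin m) F, x ∈ invariants σ → x.totalDegree ≤ d →
      algOf π x ∈ Algebra.adjoin F
        {p : MvPolynomial (Fin nV) F | p ∈ invariants ρ ∧ p.totalDegree ≤ d} := by
    intro x hxinv hxdeg
    refine Algebra.subset_adjoin ⟨?_, (algOf_totalDegree_le π x).trans hxdeg⟩
    intro h
    rw [algOf_comp]
    have hcommute : ρ h ∘ₗ π = π ∘ₗ σ (h : G) := LinearMap.ext fun y => hπequiv h y
    rw [hcommute, ← algOf_comp, hxinv (h : G)]
  set τ : MvPolynomial (Fin m) F := ∑ g : G, algOf (σ g) (algOf ι p) with hτ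
  have hτinv : τ ∈ invariants σ := sumG_mem σ _
  have hπτ : algOf π τ
      = (Finset.univ.filter fun g : G => g ∈ H).card • p
        + (Finset.univ.filter fun g : G => g ∉ H).card • MvPolynomial.C (constantCoeff p) := by
    rw [hτ, map_sum]
    have hterm : ∀ g : G, algOf π (algOf (σ g) (algOf ι p))
        = if g ∈ H then p else MvPolynomial.C (constantCoeff p) := by
      intro g
      rw [algOf_comp, algOf_comp]
      by_cases hg : g ∈ H
      · rw [if_pos hg, hπσιH g hg]
        exact hp ⟨g, hg⟩
      · rw [if_neg hg, hπσιnH g hg, algOf_zero]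
    rw [Finset.sum_congr rfl fun g _ => hterm g, Finset.sum_ite]
    simp [Finset.sum_const]
  have hcard : (((Finset.univ.filter fun g : G => g ∈ H).card : ℕ) : F) ≠ 0 := by
    have h1' : (Finset.univ.filter fun g : G => g ∈ H).card = Nat.card H := by
      rw [Nat.card_eq_fintype_card, Fintype.card_subtype]
    obtain ⟨k, hk⟩ := H.card_subgroup_dvd_card
    intro h0
    refine hchar ?_
    have h2' : ((Nat.card H : ℕ) : F) = 0 := by rw [← h1']; exact h0
    rw [← Nat.card_eq_fintype_card, hk, Nat.cast_mul, h2', zero_mul]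
  have hpeq : p = (((Finset.univ.filter fun g : G => g ∈ H).card : ℕ) : F)⁻¹
      • (algOf π τ
        - (((Finset.univ.filter fun g : G => g ∉ H).card : ℕ) : F)
            • MvPolynomial.C (constantCoeff p)) := by
    rw [hπτ, ← Nat.cast_smul_eq_nsmul F, ← Nat.cast_smul_eq_nsmul F
      (n := (Finset.univ.filter fun g : G => g ∉ H).card)]
    rw [add_sub_cancel_right, smul_smul, inv_mul_cancel₀ hcard, one_smul]
  rw [hpeq]
  refine Subalgebra.smul_mem _ (Subalgebra.sub_mem _ ?_ (Subalgebra.smul_mem _ ?_ _)) _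
  · have hτA : τ ∈ Algebra.adjoin F
        {x : MvPolynomial (Fin m) F | x ∈ invariants σ ∧ x.totalDegree ≤ d} := by
      rw [hσd]; exact hτinv
    have hmap : algOf π τ ∈ (Algebra.adjoin F
        {x : MvPolynomial (Fin m) F | x ∈ invariants σ ∧ x.totalDegree ≤ d}).map (algOf π) :=
      ⟨τ, hτA, rfl⟩
    rw [AlgHom.map_adjoin] at hmap
    refine Algebra.adjoin_le ?_ hmap
    rintro _ ⟨x, ⟨hxinv, hxdeg⟩, rfl⟩
    exact himg x hxinv hxdeg
  · rw [← algebraMap_eq]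
    exact Subalgebra.algebraMap_mem _ _

end Transfer
/-- `β(G, Ind_H^G V) ≥ β(H, V)`.  Here `σ` on `F^m` is the induced
module `Ind_H^G V`: it contains `V = F^(nV)` as an `H`-submodule via the equivariant
embedding `ι`, and is the direct sum of the translates `g·V` over a left transversal `C`. -/
theorem stmt0
    {G : Type} [Group G] [Fintype G]
    (hchar : (Fintype.card G : F) ≠ 0)
    (H : Subgroup G) {nV m : ℕ}
    (ρ : Representation F H (Fin nV → F))
    (σ : Representation F G (Fin m → F))
    (ι : (Fin nV → F) →ₗ[F] (Fin m → F)) (hι : Function.Injective ι)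
    (hequiv : ∀ h : H, σ h ∘ₗ ι = ι ∘ₗ ρ h)
    (C : Set G) (hC : Subgroup.IsComplement C (H : Set G)) (h1 : (1:G) ∈ C)
    (hindep : iSupIndep fun c : C => (LinearMap.range ι).map (σ c.1))
    (hspan : ⨆ c : C, (LinearMap.range ι).map (σ c.1) = ⊤) :
    noether ρ ≤ noether σ := by
  have hne : ∃ d, genLE σ d := exists_genLE hchar σ
  have h1' : noether σ ∈ {d | genLE σ d} := Nat.sInf_mem hne
  exact Nat.sInf_le
    (genLE_of_induced hchar H ρ σ ι hι hequiv C hC h1 hindep hspan _ h1')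

end
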